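/- arXiv:2503.02052 — 4 statements merged into one kernel-verified Lean document; each statement's English description precedes it below -/
import Mathlib

section
/- Let T be a triangulated category with a bounded t-structure with heart A, and let A' ⊆ A be a Serre subcategory. Then the thick closure of A' in T (the smallest thick full triangulated subcategory containing A') equals the full subcategory {E ∈ T | H^i(E) ∈ A' for all i ∈ ℤ}. -/
open CategoryTheory CategoryTheory.Limits CategoryTheory.Pretriangulated

universe v u v' u'

section TriangulatedDefs

variable (T : Type u) [Category.{v} T] [HasZeroObject T] [Preadditive T] [HasShift T ℤ]
  [∀ n : ℤ, (shiftFunctor T n).Additive] [Pretriangulated T]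

/-- A (strictly full) triangulated subcategory, as a predicate on objects. -/
structure IsTriangulatedSub (P : Set T) : Prop where
  zero : ∀ X : T, IsZero X → X ∈ P
  iso : ∀ {X Y : T}, (X ≅ Y) → X ∈ P → Y ∈ P
  shift : ∀ (X : T) (n : ℤ), X ∈ P → (X⟦n⟧ : T) ∈ P
  ext₂ : ∀ Tr : Triangle T, Tr ∈ (distTriang T) → Tr.obj₁ ∈ P → Tr.obj₃ ∈ P → Tr.obj₂ ∈ P

/-- A thick triangulated subcategory: also closed under direct summands (retracts). -/
structure IsThickSub (P : Set T) extends IsTriangulatedSub T P : Prop where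
  summand : ∀ {X Y : T} (i : X ⟶ Y) (r : Y ⟶ X), i ≫ r = 𝟙 X → Y ∈ P → X ∈ P

/-- The thick closure of a set of objects: the smallest thick full triangulated
subcategory containing it. -/
def thickClosure (S : Set T) : Set T :=
  {X | ∀ P : Set T, IsThickSub T P → S ⊆ P → X ∈ P}

/-- The smallest full triangulated subcategory containing a set of objects. -/
def triangClosure (S : Set T) : Set T :=
  {X | ∀ P : Set T, IsTriangulatedSub T P → S ⊆ P → X ∈ P}

/-- A classical generator: an object whose thick closure is the whole category. -/
def IsClassicalGenerator (G : T) : Prop := ∀ X : T, X ∈ thickClosure T {G}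

end TriangulatedDefs

section SerreDefs

variable (A : Type u') [Category.{v'} A] [Abelian A]

/-- A Serre subcategory of an abelian category, as a predicate on objects:
closed under subobjects, quotient objects and extensions. -/
structure IsSerreSub (P : Set A) : Prop where
  zero : ∀ X : A, IsZero X → X ∈ P
  subobj : ∀ {X Y : A} (f : X ⟶ Y), Mono f → Y ∈ P → X ∈ P
  quot : ∀ {X Y : A} (f : X ⟶ Y), Epi f → X ∈ P → Y ∈ P
  extension : ∀ S : ShortComplex A, S.ShortExact → S.X₁ ∈ P → S.X₃ ∈ P → S.X₂ ∈ P

/-- The Serre subcategory generated by a set of objects. -/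
def serreClosure (S : Set A) : Set A :=
  {X | ∀ P : Set A, IsSerreSub A P → S ⊆ P → X ∈ P}

/-- A generator of an abelian category: an object not contained in any proper
Serre subcategory. -/
def IsAbGenerator (G : A) : Prop :=
  ∀ P : Set A, IsSerreSub A P → P ≠ Set.univ → G ∉ P

end SerreDefs

section THeart

variable (T : Type u) [Category.{v} T] [HasZeroObject T] [Preadditive T] [HasShift T ℤ]
  [∀ n : ℤ, (shiftFunctor T n).Additive] [Pretriangulated T]
variable (A : Type u') [Category.{v'} A] [Abelian A]

/-- A bounded t-structure on the triangulated category `T`, together with an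
identification of its heart with the abelian category `A` and the associated
cohomology functors `H i : T ⥤ A` (with their long exact sequences). -/
structure BoundedTHeart where
  /-- the underlying t-structure -/
  t : Triangulated.TStructure T
  /-- the t-structure is bounded -/
  bounded : ∀ X : T, ∃ n : ℕ, t.le (n : ℤ) X ∧ t.ge (-(n : ℤ)) X
  /-- the inclusion of the heart -/
  ι : A ⥤ T
  ι_full : ι.Full
  ι_faithful : ι.Faithful
  ι_heart : ∀ a : A, t.le 0 (ι.obj a) ∧ t.ge 0 (ι.obj a)
  ι_essSurj : ∀ X : T, t.le 0 X → t.ge 0 X → ∃ a : A, Nonempty (ι.obj a ≅ X)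
  /-- the cohomology functors of the t-structure -/
  H : ℤ → T ⥤ A
  H_additive : ∀ i : ℤ, (H i).Additive
  H_heart : ∀ a : A, Nonempty ((H 0).obj (ι.obj a) ≅ a)
  H_heart_zero : ∀ (a : A) (i : ℤ), i ≠ 0 → IsZero ((H i).obj (ι.obj a))
  H_shift : ∀ (i j : ℤ) (X : T), Nonempty ((H i).obj (X⟦j⟧) ≅ (H (i + j)).obj X)
  H_LE_iff : ∀ (n : ℤ) (X : T), t.le n X ↔ ∀ i : ℤ, n < i → IsZero ((H i).obj X)
  H_GE_iff : ∀ (n : ℤ) (X : T), t.ge n X ↔ ∀ i : ℤ, i < n → IsZero ((H i).obj X)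
  /-- connecting morphisms of the long exact cohomology sequence of a triangle -/
  δ : ∀ (Tr : Triangle T), Tr ∈ (distTriang T) → ∀ i : ℤ,
    ((H i).obj Tr.obj₃ ⟶ (H (i + 1)).obj Tr.obj₁)
  les₁ : ∀ (Tr : Triangle T) (_ : Tr ∈ (distTriang T)) (i : ℤ),
    ∃ w : (H i).map Tr.mor₁ ≫ (H i).map Tr.mor₂ = 0, (ShortComplex.mk _ _ w).Exact
  les₂ : ∀ (Tr : Triangle T) (hTr : Tr ∈ (distTriang T)) (i : ℤ),
    ∃ w : (H i).map Tr.mor₂ ≫ δ Tr hTr i = 0, (ShortComplex.mk _ _ w).Exact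
  les₃ : ∀ (Tr : Triangle T) (hTr : Tr ∈ (distTriang T)) (i : ℤ),
    ∃ w : δ Tr hTr i ≫ (H (i + 1)).map Tr.mor₁ = 0, (ShortComplex.mk _ _ w).Exact

variable {T A}

/-- The full subcategory of objects of `T` all of whose cohomologies (with respect to
the given bounded t-structure) lie in the subcategory `A'` of the heart. -/
def BoundedTHeart.cohIn (B : BoundedTHeart T A) (A' : Set A) : Set T :=
  {E : T | ∀ i : ℤ, (B.H i).obj E ∈ A'}

end THeart

variable {T : Type u} [Category.{v} T] [HasZeroObject T] [Preadditive T] [HasShift T ℤ]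
  [∀ n : ℤ, (shiftFunctor T n).Additive] [Pretriangulated T]
variable {A : Type u'} [Category.{v'} A] [Abelian A]


section Helpers

lemma serre_iso {A' : Set A} (hA' : IsSerreSub A A') {X Y : A} (e : X ≅ Y) (hX : X ∈ A') :
    Y ∈ A' := hA'.quot e.hom inferInstance hX

lemma serre_ext {A' : Set A} (hA' : IsSerreSub A A') {S : ShortComplex A} (hS : S.Exact)
    (h1 : S.X₁ ∈ A') (h3 : S.X₃ ∈ A') : S.X₂ ∈ A' := by
  have hker : kernel S.g ∈ A' := by
    have := (S.exact_iff_epi_kernel_lift).1 hS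
    exact hA'.quot (kernel.lift S.g S.f S.zero) this h1
  have him : image S.g ∈ A' := hA'.subobj (image.ι S.g) inferInstance h3
  have hw : kernel.ι S.g ≫ factorThruImage S.g = 0 := by
    rw [← cancel_mono (image.ι S.g)]
    simp
  refine hA'.extension (ShortComplex.mk _ _ hw) ⟨?_⟩ hker him
  apply ShortComplex.exact_of_f_is_kernel
  refine KernelFork.IsLimit.ofι _ _
    (fun s hs => kernel.lift S.g s ?_) (fun s hs => ?_) (fun s hs m hm => ?_)
  · rw [← image.fac S.g, ← Category.assoc, hs, zero_comp]
  · simp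
  · dsimp at hm ⊢
    rw [← cancel_mono (kernel.ι S.g)]
    simpa using hm

lemma cohIn_thick (B : BoundedTHeart T A) (A' : Set A) (hA' : IsSerreSub A A') :
    IsThickSub T (B.cohIn A') := by
  constructor
  case toIsTriangulatedSub =>
    constructor
    · intro X hX i
      haveI := B.H_additive i
      exact hA'.zero _ ((B.H i).map_isZero hX)
    · intro X Y e hX i
      exact serre_iso hA' ((B.H i).mapIso e) (hX i)
    · intro X n hX i
      exact serre_iso hA' (B.H_shift i n X).some.symm (hX (i + n))
    · intro Tr hTr h1 h3 i
      obtain ⟨w, hex⟩ := B.les₁ Tr hTr i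
      exact serre_ext hA' hex (h1 i) (h3 i)
  case summand =>
    intro X Y f r hfr hY i
    have hm : Mono ((B.H i).map f) := by
      have : Mono ((B.H i).map f ≫ (B.H i).map r) := by
        rw [← Functor.map_comp, hfr, CategoryTheory.Functor.map_id]
        infer_instance
      exact mono_of_mono _ ((B.H i).map r)
    exact hA'.subobj ((B.H i).map f) hm (hY i)

lemma image_subset_cohIn (B : BoundedTHeart T A) (A' : Set A) (hA' : IsSerreSub A A') :
    B.ι.obj '' A' ⊆ B.cohIn A' := by
  rintro _ ⟨a, ha, rfl⟩ i
  by_cases hi : i = 0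
  · subst hi
    exact serre_iso hA' (B.H_heart a).some.symm ha
  · exact hA'.zero _ (B.H_heart_zero a i hi)

lemma mem_thick_heart (B : BoundedTHeart T A) (A' : Set A) (hA' : IsSerreSub A A')
    (a : ℤ) (E : T) (hLE : B.t.le a E) (hGE : B.t.ge a E)
    (hcoh : ∀ i, (B.H i).obj E ∈ A') : E ∈ thickClosure T (B.ι.obj '' A') := by
  have hLE' := (B.H_LE_iff a E).1 hLE
  have hGE' := (B.H_GE_iff a E).1 hGE
  have hle0 : B.t.le 0 (E⟦a⟧) := by
    refine (B.H_LE_iff 0 _).2 (fun i hi => ?_)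
    exact ((hLE' (i + a) (by omega)).of_iso (B.H_shift i a E).some)
  have hge0 : B.t.ge 0 (E⟦a⟧) := by
    refine (B.H_GE_iff 0 _).2 (fun i hi => ?_)
    exact ((hGE' (i + a) (by omega)).of_iso (B.H_shift i a E).some)
  obtain ⟨x, ⟨e⟩⟩ := B.ι_essSurj (E⟦a⟧) hle0 hge0
  · have e1 := (B.H_shift 0 a E).some
    rw [zero_add] at e1
    have hF : (B.H 0).obj (E⟦a⟧) ∈ A' := serre_iso hA' e1.symm (hcoh a)
    have hx : x ∈ A' := by
      refine serre_iso hA' (B.H_heart x).some ?_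
      exact serre_iso hA' ((B.H 0).mapIso e).symm hF
    intro P hP hsub
    have h1 : B.ι.obj x ∈ P := hsub ⟨x, hx, rfl⟩
    have h2 : (E⟦a⟧ : T) ∈ P := hP.iso e h1
    have h3 : ((E⟦a⟧)⟦-a⟧ : T) ∈ P := hP.shift _ (-a) h2
    exact hP.iso ((shiftEquiv T a).unitIso.symm.app E) h3

lemma mem_thick_of_bounds (B : BoundedTHeart T A) (A' : Set A) (hA' : IsSerreSub A A') :
    ∀ (k : ℕ) (a : ℤ) (E : T), B.t.le (a + k) E → B.t.ge a E →
      (∀ i, (B.H i).obj E ∈ A') → E ∈ thickClosure T (B.ι.obj '' A') := by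
  intro k
  induction k with
  | zero =>
    intro a E hLE hGE hcoh
    rw [show a + ((0 : ℕ) : ℤ) = a by simp] at hLE
    exact mem_thick_heart B A' hA' a E hLE hGE hcoh
  | succ k IH =>
    intro a E hLE hGE hcoh
    rw [show a + ((k + 1 : ℕ) : ℤ) = a + k + 1 by push_cast; ring] at hLE
    obtain ⟨X, Y, hX_le, hY_ge, f, g, h, hTr⟩ := B.t.exists_triangle E (a + k) (a + k + 1) rfl
    set Tr := Triangle.mk f g h with hTrdef
    have hXz : ∀ i : ℤ, a + k < i → IsZero ((B.H i).obj X) := (B.H_LE_iff _ X).1 hX_le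
    have hYz : ∀ i : ℤ, i < a + k + 1 → IsZero ((B.H i).obj Y) := (B.H_GE_iff _ Y).1 hY_ge
    have hEz_hi : ∀ i : ℤ, a + k + 1 < i → IsZero ((B.H i).obj E) := (B.H_LE_iff _ E).1 hLE
    have hEz_lo : ∀ i : ℤ, i < a → IsZero ((B.H i).obj E) := (B.H_GE_iff _ E).1 hGE
    -- cohomology of Y vanishes above a+k+1
    have hYz_hi : ∀ i : ℤ, a + k + 1 < i → IsZero ((B.H i).obj Y) := by
      intro i hi
      obtain ⟨w, hex⟩ := B.les₂ Tr hTr i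
      refine hex.isZero_X₂ ?_ ?_
      · exact (hEz_hi i hi).eq_of_src _ 0
      · exact (hXz (i + 1) (by omega)).eq_of_tgt _ 0
    -- cohomology of Y lies in A'
    have hYcoh : ∀ i : ℤ, (B.H i).obj Y ∈ A' := by
      intro i
      rcases lt_trichotomy i (a + k + 1) with hi | hi | hi
      · exact hA'.zero _ (hYz i hi)
      · subst hi
        obtain ⟨w, hex⟩ := B.les₂ Tr hTr (a + k + 1)
        have hepi : Epi ((B.H (a + k + 1)).map Tr.mor₂) := by
          refine hex.epi_f ?_
          exact (hXz (a + k + 1 + 1) (by omega)).eq_of_tgt _ 0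
        exact hA'.quot _ hepi (hcoh (a + k + 1))
      · exact hA'.zero _ (hYz_hi i hi)
    -- Y is in the heart at a+k+1
    have hY_le : B.t.le (a + k + 1) Y := (B.H_LE_iff _ Y).2 (fun i hi => hYz_hi i hi)
    -- cohomology of X lies in A'
    have hXcoh : ∀ i : ℤ, (B.H i).obj X ∈ A' := by
      intro i
      by_cases hi : a + k < i
      · exact hA'.zero _ (hXz i hi)
      · obtain ⟨w, hex⟩ := B.les₃ Tr hTr (i - 1)
        have hmono : Mono ((B.H (i - 1 + 1)).map Tr.mor₁) := by
          refine hex.mono_g ?_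
          exact (hYz (i - 1) (by omega)).eq_of_src _ 0
        have : (B.H (i - 1 + 1)).obj X ∈ A' :=
          hA'.subobj ((B.H (i - 1 + 1)).map Tr.mor₁) hmono (hcoh (i - 1 + 1))
        simpa only [sub_add_cancel] using this
    -- X is ≥ a
    have hX_ge : B.t.ge a X := by
      refine (B.H_GE_iff a X).2 (fun i hi => ?_)
      obtain ⟨w, hex⟩ := B.les₃ Tr hTr (i - 1)
      have : IsZero ((B.H (i - 1 + 1)).obj X) := by
        refine hex.isZero_X₂ ?_ ?_
        · exact (hYz (i - 1) (by omega)).eq_of_src _ 0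
        · exact (hEz_lo (i - 1 + 1) (by omega)).eq_of_tgt _ 0
      simpa only [sub_add_cancel] using this
    have hXthick : X ∈ thickClosure T (B.ι.obj '' A') := IH a X hX_le hX_ge hXcoh
    have hYthick : Y ∈ thickClosure T (B.ι.obj '' A') :=
      mem_thick_heart B A' hA' (a + k + 1) Y hY_le hY_ge hYcoh
    intro P hP hsub
    exact hP.ext₂ Tr hTr (hXthick P hP hsub) (hYthick P hP hsub)

end Helpers

/-- the thick closure in `T` of a Serre subcategory `A'` of the heart of a
bounded t-structure equals `{E | ∀ i, H^i(E) ∈ A'}`. -/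
theorem stmt1 (B : BoundedTHeart T A) (A' : Set A) (hA' : IsSerreSub A A') :
    thickClosure T (B.ι.obj '' A') = B.cohIn A' := by
  apply Set.eq_of_subset_of_subset
  · intro E hE
    exact hE (B.cohIn A') (cohIn_thick B A' hA') (image_subset_cohIn B A' hA')
  · intro E hE
    obtain ⟨n, hLE, hGE⟩ := B.bounded E
    refine mem_thick_of_bounds B A' hA' (2 * n) (-(n : ℤ)) E ?_ hGE hE
    rw [show -(n : ℤ) + ((2 * n : ℕ) : ℤ) = (n : ℤ) by push_cast; ring]
    exact hLE
end

section
/- Let T be a triangulated category with a bounded t-structure with heart A, and let A' ⊆ A be a Serre subcategory. Then the smallest triangulated subcategory of T containing A' coincides with the thick closure of A' in T. -/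
open CategoryTheory CategoryTheory.Limits CategoryTheory.Pretriangulated

universe v u v' u'

section Aux

variable {A'' : Type u'} [Category.{v'} A''] [Abelian A'']

lemma IsSerreSub.mem_of_iso {P : Set A''} (hP : IsSerreSub A'' P) {X Y : A''}
    (e : X ≅ Y) (hY : Y ∈ P) : X ∈ P :=
  hP.subobj e.hom inferInstance hY

/-- Key lemma: a Serre subcategory is closed under "middle term of an exact complex". -/
lemma IsSerreSub.mem_of_exact {P : Set A''} (hP : IsSerreSub A'' P)
    (S : ShortComplex A'') (hS : S.Exact) (h1 : S.X₁ ∈ P) (h3 : S.X₃ ∈ P) : S.X₂ ∈ P := by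
  have hker : (kernel S.g : A'') ∈ P := by
    have hepi : Epi S.toCycles := hS.epi_toCycles
    refine hP.quot (S.toCycles ≫ S.cyclesIsoKernel.hom) ?_ h1
    exact epi_comp _ _
  have hcoim : (Abelian.coimage S.g : A'') ∈ P :=
    hP.subobj (Abelian.factorThruCoimage S.g) inferInstance h3
  have w : kernel.ι S.g ≫ cokernel.π (kernel.ι S.g) = 0 := cokernel.condition _
  have hse : (ShortComplex.mk (kernel.ι S.g) (cokernel.π (kernel.ι S.g)) w).ShortExact := by
    refine ⟨?_⟩
    exact ShortComplex.exact_of_g_is_cokernel _ (cokernelIsCokernel (kernel.ι S.g))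
  exact hP.extension (ShortComplex.mk _ _ w) hse hker hcoim

end Aux

section Main

variable {T : Type u} [Category.{v} T] [HasZeroObject T] [Preadditive T] [HasShift T ℤ]
  [∀ n : ℤ, (shiftFunctor T n).Additive] [Pretriangulated T]
variable {A : Type u'} [Category.{v'} A] [Abelian A]

lemma cohIn_isTriangulatedSub (B : BoundedTHeart T A) {A' : Set A} (hA' : IsSerreSub A A') :
    IsTriangulatedSub T (B.cohIn A') := by
  constructor
  · intro X hX i
    haveI := B.H_additive i
    exact hA'.zero _ ((B.H i).map_isZero hX)
  · intro X Y e hX i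
    exact hA'.mem_of_iso ((B.H i).mapIso e).symm (hX i)
  · intro X n hX i
    obtain ⟨e⟩ := B.H_shift i n X
    exact hA'.mem_of_iso e (hX (i + n))
  · intro Tr hTr h1 h3 i
    obtain ⟨w, hw⟩ := B.les₁ Tr hTr i
    exact hA'.mem_of_exact _ hw (h1 i) (h3 i)

lemma subset_cohIn (B : BoundedTHeart T A) {A' : Set A} (hA' : IsSerreSub A A') :
    B.ι.obj '' A' ⊆ B.cohIn A' := by
  rintro _ ⟨a, ha, rfl⟩ i
  by_cases h : i = 0
  · subst h
    obtain ⟨e⟩ := B.H_heart a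
    exact hA'.mem_of_iso e ha
  · exact hA'.zero _ (B.H_heart_zero a i h)

lemma triangClosure_isTriangulatedSub (S : Set T) :
    IsTriangulatedSub T (triangClosure T S) := by
  constructor
  · intro X hX P hP hS
    exact hP.zero X hX
  · intro X Y e hX P hP hS
    exact hP.iso e (hX P hP hS)
  · intro X n hX P hP hS
    exact hP.shift X n (hX P hP hS)
  · intro Tr hTr h1 h3 P hP hS
    exact hP.ext₂ Tr hTr (h1 P hP hS) (h3 P hP hS)

lemma mem_triangClosure_of_cohIn (B : BoundedTHeart T A) {A' : Set A}
    (hA' : IsSerreSub A A') :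
    ∀ (n : ℕ) (a : ℤ) (E : T),
      (∀ i : ℤ, i < a → IsZero ((B.H i).obj E)) →
      (∀ i : ℤ, a + n < i → IsZero ((B.H i).obj E)) →
      (∀ i : ℤ, (B.H i).obj E ∈ A') →
      E ∈ triangClosure T (B.ι.obj '' A') := by
  intro n
  induction n with
  | zero =>
    intro a E hlow hhigh hmem
    have hLE : B.t.le a E := (B.H_LE_iff a E).2 (fun i hi => hhigh i (by push_cast; omega))
    have hGE : B.t.ge a E := (B.H_GE_iff a E).2 hlow
    have hLE0 : B.t.le 0 (E⟦a⟧) := B.t.le_shift a a 0 (by omega) E hLE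
    have hGE0 : B.t.ge 0 (E⟦a⟧) := B.t.ge_shift a a 0 (by omega) E hGE
    obtain ⟨c, ⟨e⟩⟩ := B.ι_essSurj _ hLE0 hGE0
    have hc : c ∈ A' := by
      obtain ⟨e₀⟩ := B.H_heart c
      obtain ⟨e₁⟩ := B.H_shift 0 a E
      exact hA'.mem_of_iso (e₀.symm ≪≫ (B.H 0).mapIso e ≪≫ e₁) (hmem (0 + a))
    intro P hP hS
    have h1 : B.ι.obj c ∈ P := hS ⟨c, hc, rfl⟩
    have h2 : (E⟦a⟧ : T) ∈ P := hP.iso e h1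
    have h3 := hP.shift _ (-a) h2
    exact hP.iso ((shiftEquiv T a).unitIso.app E).symm h3
  | succ n IH =>
    intro a E hlow hhigh hmem
    obtain ⟨X, Y, hX, hY, f, g, h, hT⟩ := B.t.exists_triangle E a (a + 1) rfl
    have hXz : ∀ i : ℤ, a < i → IsZero ((B.H i).obj X) := (B.H_LE_iff a X).1 hX
    have hYz : ∀ i : ℤ, i < a + 1 → IsZero ((B.H i).obj Y) := (B.H_GE_iff (a + 1) Y).1 hY
    have hXmono : ∀ i : ℤ, i ≤ a → ∃ φ : (B.H i).obj X ⟶ (B.H i).obj E, Mono φ := by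
      intro i hi
      obtain ⟨j, rfl⟩ : ∃ j, i = j + 1 := ⟨i - 1, by omega⟩
      obtain ⟨w, hw⟩ := B.les₃ (Triangle.mk f g h) hT j
      exact ⟨(B.H (j + 1)).map f, hw.mono_g ((hYz j (by omega)).eq_zero_of_src _)⟩
    have hXm : ∀ i : ℤ, (B.H i).obj X ∈ A' := by
      intro i
      by_cases hi : i ≤ a
      · obtain ⟨φ, hφ⟩ := hXmono i hi
        exact hA'.subobj φ hφ (hmem i)
      · exact hA'.zero _ (hXz i (by omega))
    have hXlow : ∀ i : ℤ, i < a → IsZero ((B.H i).obj X) := by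
      intro i hi
      obtain ⟨φ, hφ⟩ := hXmono i (le_of_lt hi)
      haveI := hφ
      exact IsZero.of_mono φ (hlow i hi)
    have hXmem : X ∈ triangClosure T (B.ι.obj '' A') :=
      IH a X hXlow (fun i hi => hXz i (by omega)) hXm
    have hYepi : ∀ i : ℤ, a + 1 ≤ i → ∃ φ : (B.H i).obj E ⟶ (B.H i).obj Y, Epi φ := by
      intro i hi
      obtain ⟨w, hw⟩ := B.les₂ (Triangle.mk f g h) hT i
      exact ⟨(B.H i).map g, hw.epi_f ((hXz (i + 1) (by omega)).eq_zero_of_tgt _)⟩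
    have hYm : ∀ i : ℤ, (B.H i).obj Y ∈ A' := by
      intro i
      by_cases hi : a + 1 ≤ i
      · obtain ⟨φ, hφ⟩ := hYepi i hi
        exact hA'.quot φ hφ (hmem i)
      · exact hA'.zero _ (hYz i (by omega))
    have hYhigh : ∀ i : ℤ, (a + 1) + n < i → IsZero ((B.H i).obj Y) := by
      intro i hi
      obtain ⟨φ, hφ⟩ := hYepi i (by omega)
      haveI := hφ
      exact IsZero.of_epi φ (hhigh i (by push_cast at hi ⊢; omega))
    have hYmem : Y ∈ triangClosure T (B.ι.obj '' A') :=
      IH (a + 1) Y (fun i hi => hYz i (by omega)) hYhigh hYm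
    intro P hP hS
    exact hP.ext₂ _ hT (hXmem P hP hS) (hYmem P hP hS)

end Main

variable {T : Type u} [Category.{v} T] [HasZeroObject T] [Preadditive T] [HasShift T ℤ]
  [∀ n : ℤ, (shiftFunctor T n).Additive] [Pretriangulated T]
variable {A : Type u'} [Category.{v'} A] [Abelian A]

/-- for a Serre subcategory `A'` of the heart of a bounded t-structure
on `T`, the smallest triangulated subcategory of `T` containing `A'` coincides with the
thick closure of `A'` in `T`. -/
theorem stmt2 (B : BoundedTHeart T A) (A' : Set A) (hA' : IsSerreSub A A') :
    triangClosure T (B.ι.obj '' A') = thickClosure T (B.ι.obj '' A') := by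
  apply Set.Subset.antisymm
  · intro X hX P hP hS
    exact hX P hP.toIsTriangulatedSub hS
  · intro X hX
    refine hX _ ⟨triangClosure_isTriangulatedSub _, ?_⟩ (fun s hs P hP hS => hS hs)
    intro X' Y' i r hir hY'
    have hYcoh : Y' ∈ B.cohIn A' :=
      hY' _ (cohIn_isTriangulatedSub B hA') (subset_cohIn B hA')
    have hXcoh : ∀ j : ℤ, (B.H j).obj X' ∈ A' := by
      intro j
      haveI := B.H_additive j
      haveI : IsSplitMono ((B.H j).map i) :=
        IsSplitMono.mk' ⟨(B.H j).map r, by rw [← Functor.map_comp, hir]; exact (B.H j).map_id X'⟩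
      exact hA'.subobj ((B.H j).map i) inferInstance (hYcoh j)
    obtain ⟨m, hLE, hGE⟩ := B.bounded X'
    refine mem_triangClosure_of_cohIn B hA' (2 * m) (-(m : ℤ)) X' ?_ ?_ hXcoh
    · exact fun i hi => (B.H_GE_iff _ _).1 hGE i hi
    · intro i hi
      exact (B.H_LE_iff _ _).1 hLE i (by push_cast at hi; omega)
end

section
/- Let A be an abelian category in which every object is Artinian (every descending chain of subobjects stabilizes). Then the Krull–Gabriel dimension of A is defined. -/
open CategoryTheory CategoryTheory.Limits CategoryTheory.Pretriangulated

universe v u v' u'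

section KrullGabriel

variable (A : Type u') [Category.{v'} A] [Abelian A]

/-- `X` is simple modulo the Serre subcategory `P`, i.e. `X` becomes a simple object
in the Serre quotient `A/P`: it is nonzero in the quotient, and every subobject of `X`
becomes either zero or all of `X` in the quotient. -/
def SimpleModulo (P : Set A) (X : A) : Prop :=
  X ∉ P ∧ ∀ Y : Subobject X, ((Y : A) ∈ P ∨ Limits.cokernel Y.arrow ∈ P)

/-- The Krull-Gabriel filtration of an abelian category (indexed so that `A_{≤ -1} = 0`
corresponds to the empty stage): at a non-limit ordinal `α`, `KGFilt A α` is the Serre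
subcategory generated by the previous stages together with the objects that become
simple in the Serre quotient by the previous stage; at a limit ordinal it is the union
of the previous stages. -/
noncomputable def KGFilt (α : Ordinal.{u'}) : Set A :=
  letI := Classical.propDecidable (Order.IsSuccLimit α)
  if Order.IsSuccLimit α then
    {X | ∃ β : Ordinal.{u'}, ∃ _ : β < α, X ∈ KGFilt β}
  else
    serreClosure A
      ({X | SimpleModulo A (serreClosure A {Y | ∃ β : Ordinal.{u'}, ∃ _ : β < α, Y ∈ KGFilt β}) X}
        ∪ {Y | ∃ β : Ordinal.{u'}, ∃ _ : β < α, Y ∈ KGFilt β})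
termination_by α

/-- The Krull-Gabriel dimension of `A` is defined iff the filtration exhausts `A`. -/
def KGdimDefined : Prop := ∃ α : Ordinal.{u'}, KGFilt A α = Set.univ

/-- The Krull-Gabriel dimension: the least ordinal at which the filtration exhausts `A`. -/
noncomputable def KGdim : Ordinal.{u'} := sInf {α : Ordinal.{u'} | KGFilt A α = Set.univ}

end KrullGabriel

variable {A : Type u'} [Category.{v'} A] [Abelian A]

lemma serreClosure_isSerre (S : Set A) : IsSerreSub A (serreClosure A S) where
  zero := fun X hX P hP _ => hP.zero X hX
  subobj := fun f hf hY P hP hS => hP.subobj f hf (hY P hP hS)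
  quot := fun f hf hX P hP hS => hP.quot f hf (hX P hP hS)
  extension := fun S' hS' h1 h3 P hP hS =>
    hP.extension S' hS' (h1 P hP hS) (h3 P hP hS)

lemma subset_serreClosure (S : Set A) : S ⊆ serreClosure A S :=
  fun _ hX _ _ hS => hS hX

lemma serreClosure_mono {S T : Set A} (h : S ⊆ T) :
    serreClosure A S ⊆ serreClosure A T :=
  fun _ hX P hP hT => hX P hP (h.trans hT)

/-- if every object of the abelian category `A` is Artinian (descending
chain condition on subobjects), then the Krull-Gabriel dimension of `A` is defined. -/
theorem stmt8 (h : ∀ X : A, WellFoundedLT (Subobject X)) :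
    ∃ α : Ordinal.{u'}, KGFilt A α = Set.univ := by
  classical
  set P : Set A := {X | ∃ α : Ordinal.{u'}, X ∈ KGFilt A α} with hPdef
  set f : A → Ordinal.{u'} := fun X => sInf {α | X ∈ KGFilt A α} with hfdef
  set γ : Ordinal.{u'} := (⨆ X, f X) + Ordinal.omega0 with hγdef
  have hγlim : Order.IsSuccLimit γ := Ordinal.isSuccLimit_add _ Ordinal.isSuccLimit_omega0
  have hflt : ∀ X : A, f X < γ := fun X =>
    lt_of_le_of_lt (le_ciSup (Ordinal.bddAbove_range f) X)
      (lt_add_of_pos_right _ Ordinal.omega0_pos)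
  -- KGFilt at the limit ordinal γ equals the union P of all stages
  have hKGγ : KGFilt A γ = P := by
    rw [KGFilt, if_pos hγlim]
    ext X
    constructor
    · rintro ⟨β, _, hβ⟩; exact ⟨β, hβ⟩
    · rintro ⟨α, hα⟩
      have hne : {α : Ordinal.{u'} | X ∈ KGFilt A α}.Nonempty := ⟨α, hα⟩
      exact ⟨f X, hflt X, csInf_mem hne⟩
  -- the union of stages below succ γ is P
  have hU : {Y : A | ∃ β : Ordinal.{u'}, ∃ _ : β < Order.succ γ, Y ∈ KGFilt A β} = P := by
    ext X
    constructor
    · rintro ⟨β, _, hβ⟩; exact ⟨β, hβ⟩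
    · rintro hx
      exact ⟨γ, Order.lt_succ γ, hKGγ ▸ hx⟩
  set Q : Set A := serreClosure A P with hQdef
  have hQserre : IsSerreSub A Q := serreClosure_isSerre P
  -- the successor stage
  have hKGsucc : KGFilt A (Order.succ γ) =
      serreClosure A ({X | SimpleModulo A Q X} ∪ P) := by
    rw [KGFilt, if_neg (Order.not_isSuccLimit_succ γ), hU]
  have hsub : KGFilt A (Order.succ γ) ⊆ P := fun X hX => ⟨Order.succ γ, hX⟩
  have hPQ : P ⊆ Q := subset_serreClosure P
  -- every object is in Q
  have hQuniv : ∀ X : A, X ∈ Q := by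
    intro X
    by_contra hX
    -- find a minimal subobject of X not in Q
    have hwf := (h X).wf
    have htop : (((⊤ : Subobject X) : A)) ∉ Q := by
      intro htop
      exact hX (hQserre.quot (⊤ : Subobject X).arrow inferInstance htop)
    obtain ⟨Y, hYT, hmin⟩ :=
      hwf.has_min {Y : Subobject X | ((Y : A)) ∉ Q} ⟨⊤, htop⟩
    -- Y is simple modulo Q
    have hsimple : SimpleModulo A Q ((Y : A)) := by
      refine ⟨hYT, fun Z => ?_⟩
      by_cases hZ : ((Z : A)) ∈ Q
      · exact Or.inl hZ
      · right
        -- the subobject of X given by Z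
        have hWle : Subobject.mk (Z.arrow ≫ Y.arrow) ≤ Y := by
          conv_rhs => rw [← Subobject.mk_arrow Y]
          exact Subobject.mk_le_mk_of_comm Z.arrow rfl
        have hWQ : ((Subobject.mk (Z.arrow ≫ Y.arrow) : A)) ∉ Q := by
          intro hw
          exact hZ (hQserre.quot (Subobject.underlyingIso (Z.arrow ≫ Y.arrow)).hom
            inferInstance hw)
        have hWeq : Subobject.mk (Z.arrow ≫ Y.arrow) = Y :=
          hWle.lt_or_eq.resolve_left (hmin _ hWQ)
        -- hence Z.arrow is an isomorphism
        have hmkeq : Subobject.mk (Z.arrow ≫ Y.arrow) = Subobject.mk Y.arrow := by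
          rw [hWeq, Subobject.mk_arrow]
        have hiso : IsIso Z.arrow := by
          have hcomm := Subobject.ofMkLEMk_comp hmkeq.le
          have : Subobject.ofMkLEMk (Z.arrow ≫ Y.arrow) Y.arrow hmkeq.le = Z.arrow :=
            (cancel_mono Y.arrow).1 hcomm
          rw [← this]
          exact ⟨Subobject.ofMkLEMk Y.arrow (Z.arrow ≫ Y.arrow) hmkeq.ge, by simp, by simp⟩
        have : Epi Z.arrow := by infer_instance
        exact hQserre.zero _ (IsZero.of_epi_eq_zero (cokernel.π Z.arrow)
          (cokernel.π_of_epi _))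
    -- so Y lies in the next stage, contradicting Y ∉ Q
    have : ((Y : A)) ∈ KGFilt A (Order.succ γ) := by
      rw [hKGsucc]
      exact subset_serreClosure _ (Or.inl hsimple)
    exact hYT (hPQ (hsub this))
  -- therefore the successor stage is everything
  refine ⟨Order.succ γ, ?_⟩
  rw [hKGsucc]
  apply Set.eq_univ_of_univ_subset
  intro X _
  exact serreClosure_mono Set.subset_union_right (hQuniv X)
end

section
/- Let C be a triangulated category with a bounded t-structure with heart A. Then the natural map K_0(A) → K_0(C), [X] ↦ [X], is an isomorphism of abelian groups. -/
open CategoryTheory CategoryTheory.Limits CategoryTheory.Pretriangulated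

universe v u v' u'

section K0Ab

variable (A : Type u') [Category.{v'} A] [Abelian A]

/-- Relations for the Grothendieck group of an abelian category. -/
def K0AbRel : AddSubgroup (FreeAbelianGroup A) :=
  AddSubgroup.closure {x | ∃ S : ShortComplex A, S.ShortExact ∧
    x = FreeAbelianGroup.of S.X₂ - FreeAbelianGroup.of S.X₁ - FreeAbelianGroup.of S.X₃}

/-- The Grothendieck group `K₀` of an abelian category: the free abelian group on
objects modulo the relations `[X₂] = [X₁] + [X₃]` for short exact sequences
`0 → X₁ → X₂ → X₃ → 0`. -/
def K0Ab := FreeAbelianGroup A ⧸ K0AbRel A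

noncomputable instance : AddCommGroup (K0Ab A) :=
  QuotientAddGroup.Quotient.addCommGroup (K0AbRel A)

/-- The class of an object in `K₀` of an abelian category. -/
def K0AbCls (X : A) : K0Ab A := QuotientAddGroup.mk (FreeAbelianGroup.of X)

end K0Ab

section K0Tri

variable (T : Type u) [Category.{v} T] [HasZeroObject T] [Preadditive T] [HasShift T ℤ]
  [∀ n : ℤ, (shiftFunctor T n).Additive] [Pretriangulated T]

/-- Relations for the Grothendieck group of a triangulated category. -/
def K0TriRel : AddSubgroup (FreeAbelianGroup T) :=
  AddSubgroup.closure {x | ∃ Tr : Triangle T, Tr ∈ (distTriang T) ∧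
    x = FreeAbelianGroup.of Tr.obj₂ - FreeAbelianGroup.of Tr.obj₁ - FreeAbelianGroup.of Tr.obj₃}

/-- The Grothendieck group `K₀` of a triangulated category: the free abelian group on
objects modulo the relations `[Y] = [X] + [Z]` for exact triangles `X → Y → Z → X[1]`. -/
def K0Tri := FreeAbelianGroup T ⧸ K0TriRel T

noncomputable instance : AddCommGroup (K0Tri T) :=
  QuotientAddGroup.Quotient.addCommGroup (K0TriRel T)

/-- The class of an object in `K₀` of a triangulated category. -/
def K0TriCls (X : T) : K0Tri T := QuotientAddGroup.mk (FreeAbelianGroup.of X)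

end K0Tri

variable {T : Type u} [Category.{v} T] [HasZeroObject T] [Preadditive T] [HasShift T ℤ]
  [∀ n : ℤ, (shiftFunctor T n).Additive] [Pretriangulated T]
variable {A : Type u'} [Category.{v'} A] [Abelian A]

section AuxAb

open ZeroObject

variable {A : Type u'} [Category.{v'} A] [Abelian A]

lemma K0Ab_eq_of_sub_mem {x y : FreeAbelianGroup A} (h : x - y ∈ K0AbRel A) :
    (QuotientAddGroup.mk x : K0Ab A) = QuotientAddGroup.mk y :=
  (QuotientAddGroup.eq_iff_sub_mem).2 h

lemma K0Ab_rel {S : ShortComplex A} (hS : S.ShortExact) :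
    K0AbCls A S.X₂ = K0AbCls A S.X₁ + K0AbCls A S.X₃ := by
  have h : FreeAbelianGroup.of S.X₂ - (FreeAbelianGroup.of S.X₁ + FreeAbelianGroup.of S.X₃)
      ∈ K0AbRel A := by
    rw [show FreeAbelianGroup.of S.X₂ - (FreeAbelianGroup.of S.X₁ + FreeAbelianGroup.of S.X₃)
      = FreeAbelianGroup.of S.X₂ - FreeAbelianGroup.of S.X₁ - FreeAbelianGroup.of S.X₃ by abel]
    unfold K0AbRel
    exact AddSubgroup.subset_closure ⟨S, hS, rfl⟩
  exact K0Ab_eq_of_sub_mem h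

lemma K0Ab_zero {Z : A} (hZ : IsZero Z) : K0AbCls A Z = 0 := by
  have mono : Mono (0 : Z ⟶ Z) := ⟨fun u v _ => hZ.eq_of_tgt u v⟩
  have epi : Epi (0 : Z ⟶ Z) := ⟨fun u v _ => hZ.eq_of_src u v⟩
  have hS : (ShortComplex.mk (0 : Z ⟶ Z) (0 : Z ⟶ Z) (by simp)).ShortExact :=
    { exact := ShortComplex.exact_of_isZero_X₂ _ hZ
      mono_f := mono
      epi_g := epi }
  have := K0Ab_rel hS
  simpa using this.symm

lemma K0Ab_iso {X Y : A} (e : X ≅ Y) : K0AbCls A X = K0AbCls A Y := by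
  have hπ : cokernel.π e.hom = 0 := by
    rw [← cancel_epi e.hom]; simp
  have : Epi (0 : Y ⟶ cokernel e.hom) := by rw [← hπ]; infer_instance
  have hz : IsZero (cokernel e.hom) := IsZero.of_epi_zero Y _
  have hS : (ShortComplex.mk e.hom (cokernel.π e.hom) (by simp)).ShortExact :=
    { exact := ShortComplex.exact_cokernel e.hom
      mono_f := inferInstance
      epi_g := inferInstance }
  have := K0Ab_rel hS
  rw [K0Ab_zero hz, add_zero] at this
  exact this.symm

lemma K0Ab_isZero_of_mono {X Y : A} (f : X ⟶ Y) [Mono f] (hY : IsZero Y) :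
    K0AbCls A X = 0 :=
  K0Ab_zero (IsZero.of_mono f hY)

/-- If `g ≫ h` is a complex exact at the middle, then `[src g] = [ker g] + [ker h]`. -/
lemma K0Ab_ker {Q R S' : A} (g : Q ⟶ R) (h : R ⟶ S') (w : g ≫ h = 0)
    (hex : (ShortComplex.mk g h w).Exact) :
    K0AbCls A Q = K0AbCls A (kernel g) + K0AbCls A (kernel h) := by
  have w' : kernel.ι g ≫ kernel.lift h g w = 0 := by
    rw [← cancel_mono (kernel.ι h)]
    simp
  have epi : Epi (kernel.lift h g w) :=
    ((ShortComplex.mk g h w).exact_iff_epi_kernel_lift).1 hex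
  have hex' : (ShortComplex.mk (kernel.ι g) (kernel.lift h g w) w').Exact := by
    let φ : (ShortComplex.mk (kernel.ι g) (kernel.lift h g w) w') ⟶
        (ShortComplex.mk (kernel.ι g) g (by simp)) :=
      { τ₁ := 𝟙 _, τ₂ := 𝟙 _, τ₃ := kernel.ι h, comm₁₂ := by simp, comm₂₃ := by simp }
    haveI : Epi φ.τ₁ := by dsimp only [φ]; infer_instance
    haveI : IsIso φ.τ₂ := by dsimp only [φ]; infer_instance
    haveI : Mono φ.τ₃ := by dsimp only [φ]; infer_instance
    rw [ShortComplex.exact_iff_of_epi_of_isIso_of_mono φ]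
    exact ShortComplex.exact_kernel g
  have hS : (ShortComplex.mk (kernel.ι g) (kernel.lift h g w) w').ShortExact :=
    { exact := hex'
      mono_f := inferInstance
      epi_g := epi }
  exact K0Ab_rel hS

end AuxAb

section AuxTri

open ZeroObject

variable {T : Type u} [Category.{v} T] [HasZeroObject T] [Preadditive T] [HasShift T ℤ]
  [∀ n : ℤ, (shiftFunctor T n).Additive] [Pretriangulated T]

lemma K0Tri_rel {Tr : Triangle T} (hTr : Tr ∈ distTriang T) :
    K0TriCls T Tr.obj₂ = K0TriCls T Tr.obj₁ + K0TriCls T Tr.obj₃ := by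
  have h : FreeAbelianGroup.of Tr.obj₂ -
      (FreeAbelianGroup.of Tr.obj₁ + FreeAbelianGroup.of Tr.obj₃) ∈ K0TriRel T := by
    rw [show FreeAbelianGroup.of Tr.obj₂ -
        (FreeAbelianGroup.of Tr.obj₁ + FreeAbelianGroup.of Tr.obj₃)
      = FreeAbelianGroup.of Tr.obj₂ - FreeAbelianGroup.of Tr.obj₁ - FreeAbelianGroup.of Tr.obj₃
      by abel]
    unfold K0TriRel
    exact AddSubgroup.subset_closure ⟨Tr, hTr, rfl⟩
  exact (QuotientAddGroup.eq_iff_sub_mem).2 h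

lemma K0Tri_zero : K0TriCls T (0 : T) = 0 := by
  have := K0Tri_rel (contractible_distinguished (0 : T))
  simpa using this.symm

lemma K0Tri_iso {X Y : T} (e : X ≅ Y) : K0TriCls T X = K0TriCls T Y := by
  have hd : Triangle.mk e.hom (0 : Y ⟶ (0 : T)) (0 : (0 : T) ⟶ X⟦(1 : ℤ)⟧) ∈ distTriang T := by
    refine isomorphic_distinguished _ (contractible_distinguished X) _ ?_
    refine Triangle.isoMk _ _ (Iso.refl _) e.symm (Iso.refl _) ?_ ?_ ?_
    · erw [e.hom_inv_id, Category.comp_id]; rfl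
    · erw [zero_comp, comp_zero]
    · erw [zero_comp, comp_zero]
  have := K0Tri_rel hd
  simp only [Triangle.mk_obj₁, Triangle.mk_obj₂, Triangle.mk_obj₃] at this
  rw [K0Tri_zero, add_zero] at this
  exact this.symm

lemma K0Tri_isZero {Z : T} (hZ : IsZero Z) : K0TriCls T Z = 0 := by
  rw [K0Tri_iso hZ.isoZero, K0Tri_zero]

lemma K0Tri_shift_one (X : T) : K0TriCls T (X⟦(1 : ℤ)⟧) = - K0TriCls T X := by
  have := K0Tri_rel (rot_of_distTriang _ (contractible_distinguished X))
  simp only [Triangle.rotate, contractibleTriangle] at this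
  simp only [Triangle.mk_obj₁, Triangle.mk_obj₂, Triangle.mk_obj₃] at this
  rw [K0Tri_zero] at this
  -- this : 0 = K0TriCls T X + K0TriCls T (X⟦(1:ℤ)⟧)
  exact eq_neg_of_add_eq_zero_right this.symm

lemma K0Tri_shift (n : ℤ) (X : T) :
    K0TriCls T (X⟦n⟧) = ((Int.negOnePow n : ℤ)) • K0TriCls T X := by
  induction n using Int.induction_on with
  | zero =>
    simp only [Int.negOnePow_zero]
    rw [K0Tri_iso ((shiftFunctorZero T ℤ).app X)]
    simp
  | succ k hk =>
    have e : (X⟦(k : ℤ) + 1⟧) ≅ (X⟦(k : ℤ)⟧)⟦(1 : ℤ)⟧ :=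
      (shiftFunctorAdd' T (k : ℤ) 1 ((k : ℤ) + 1) rfl).app X
    rw [K0Tri_iso e, K0Tri_shift_one, hk, Int.negOnePow_succ]
    push_cast
    simp [neg_smul]
  | pred k hk =>
    have e : (X⟦-(k : ℤ)⟧) ≅ (X⟦-(k : ℤ) - 1⟧)⟦(1 : ℤ)⟧ :=
      (shiftFunctorAdd' T (-(k : ℤ) - 1) 1 (-(k : ℤ)) (by ring)).app X
    have h2 : K0TriCls T (X⟦-(k : ℤ)⟧) = - K0TriCls T (X⟦-(k : ℤ) - 1⟧) := by
      rw [K0Tri_iso e, K0Tri_shift_one]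
    have h3 : K0TriCls T (X⟦-(k : ℤ) - 1⟧) = - K0TriCls T (X⟦-(k : ℤ)⟧) := by
      rw [h2, neg_neg]
    rw [show (-(k : ℤ) - 1) = (-(k : ℤ) - 1) from rfl] at h3
    rw [h3, hk, Int.negOnePow_sub]
    simp [Int.negOnePow_one, neg_smul]

end AuxTri

section Psi

variable {T : Type u} [Category.{v} T] [HasZeroObject T] [Preadditive T] [HasShift T ℤ]
  [∀ n : ℤ, (shiftFunctor T n).Additive] [Pretriangulated T]
variable {A : Type u'} [Category.{v'} A] [Abelian A]

lemma telescope_Icc {M : Type*} [AddCommGroup M] (f : ℤ → M) (a b : ℤ) (hb : a - 1 ≤ b) :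
    (∑ i ∈ Finset.Icc a b, (f i - f (i + 1))) = f a - f (b + 1) := by
  refine Int.le_induction (motive := fun b _ => (∑ i ∈ Finset.Icc a b, (f i - f (i + 1))) = f a - f (b + 1)) ?_ ?_ b hb
  · show (∑ i ∈ Finset.Icc a (a - 1), (f i - f (i + 1))) = f a - f (a - 1 + 1)
    rw [Finset.Icc_eq_empty (by omega), show a - 1 + 1 = a by ring]
    simp
  · intro b _ ih
    show (∑ i ∈ Finset.Icc a (b + 1), (f i - f (i + 1))) = f a - f (b + 1 + 1)
    have hins : Finset.Icc a (b + 1) = insert (b + 1) (Finset.Icc a b) := by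
      ext i
      simp only [Finset.mem_Icc, Finset.mem_insert]
      omega
    rw [hins, Finset.sum_insert (by simp only [Finset.mem_Icc]; omega), ih]
    abel

/-- A bound beyond which all cohomologies of `E` vanish. -/
def GoodBound (B : BoundedTHeart T A) (E : T) (N : ℕ) : Prop :=
  ∀ i : ℤ, ((N : ℤ) < i ∨ i < -(N : ℤ)) → IsZero ((B.H i).obj E)

lemma GoodBound.mono {B : BoundedTHeart T A} {E : T} {N M : ℕ} (h : N ≤ M)
    (hN : GoodBound B E N) : GoodBound B E M := fun i hi => hN i (by omega)

lemma goodBound_choose (B : BoundedTHeart T A) (E : T) :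
    GoodBound B E (B.bounded E).choose := by
  obtain ⟨h1, h2⟩ := (B.bounded E).choose_spec
  intro i hi
  rcases hi with h | h
  · exact (B.H_LE_iff _ E).1 h1 i h
  · exact (B.H_GE_iff _ E).1 h2 i h

/-- Truncated Euler characteristic. -/
noncomputable def chi (B : BoundedTHeart T A) (E : T) (N : ℕ) : K0Ab A :=
  ∑ i ∈ Finset.Icc (-(N : ℤ)) (N : ℤ), ((Int.negOnePow i : ℤ)) • K0AbCls A ((B.H i).obj E)

lemma chi_eq_of_le (B : BoundedTHeart T A) (E : T) {N M : ℕ} (h : N ≤ M)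
    (hN : GoodBound B E N) : chi B E M = chi B E N := by
  unfold chi
  symm
  apply Finset.sum_subset
  · intro i hi
    simp only [Finset.mem_Icc] at *
    omega
  · intro i hi hni
    simp only [Finset.mem_Icc] at hi hni
    rw [K0Ab_zero (hN i (by omega)), smul_zero]

/-- The Euler characteristic map on objects. -/
noncomputable def psi0 (B : BoundedTHeart T A) (E : T) : K0Ab A :=
  chi B E (B.bounded E).choose

lemma psi0_eq (B : BoundedTHeart T A) (E : T) (N : ℕ) (hN : GoodBound B E N) :
    psi0 B E = chi B E N := by
  have hn := goodBound_choose B E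
  have h1 : chi B E (max (B.bounded E).choose N) = chi B E (B.bounded E).choose :=
    chi_eq_of_le _ _ (le_max_left _ _) hn
  have h2 : chi B E (max (B.bounded E).choose N) = chi B E N :=
    chi_eq_of_le _ _ (le_max_right _ _) hN
  rw [psi0, ← h1, h2]

lemma psi0_rel (B : BoundedTHeart T A) {Tr : Triangle T} (hTr : Tr ∈ distTriang T) :
    psi0 B Tr.obj₂ = psi0 B Tr.obj₁ + psi0 B Tr.obj₃ := by
  set n₁ := (B.bounded Tr.obj₁).choose with hn₁
  set n₂ := (B.bounded Tr.obj₂).choose with hn₂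
  set n₃ := (B.bounded Tr.obj₃).choose with hn₃
  set N : ℕ := (n₁ ⊔ n₂ ⊔ n₃) + 1 with hN
  have h₁ : GoodBound B Tr.obj₁ N := (goodBound_choose B Tr.obj₁).mono (by omega)
  have h₂ : GoodBound B Tr.obj₂ N := (goodBound_choose B Tr.obj₂).mono (by omega)
  have h₃ : GoodBound B Tr.obj₃ N := (goodBound_choose B Tr.obj₃).mono (by omega)
  rw [psi0_eq B Tr.obj₁ N h₁, psi0_eq B Tr.obj₂ N h₂, psi0_eq B Tr.obj₃ N h₃]
  set v : ℤ → K0Ab A :=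
    fun i => ((Int.negOnePow i : ℤ)) • K0AbCls A (kernel ((B.H i).map Tr.mor₁)) with hv
  have key : ∀ i : ℤ,
      ((Int.negOnePow i : ℤ)) • K0AbCls A ((B.H i).obj Tr.obj₁)
      - ((Int.negOnePow i : ℤ)) • K0AbCls A ((B.H i).obj Tr.obj₂)
      + ((Int.negOnePow i : ℤ)) • K0AbCls A ((B.H i).obj Tr.obj₃)
      = v i - v (i + 1) := by
    intro i
    obtain ⟨w1, e1⟩ := B.les₁ Tr hTr i
    obtain ⟨w2, e2⟩ := B.les₂ Tr hTr i
    obtain ⟨w3, e3⟩ := B.les₃ Tr hTr i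
    have hXi := K0Ab_ker _ _ w1 e1
    have hYi := K0Ab_ker _ _ w2 e2
    have hZi := K0Ab_ker _ _ w3 e3
    rw [hXi, hYi, hZi, hv]
    simp only [Int.negOnePow_succ]
    push_cast
    simp only [smul_add, neg_smul]
    abel
  have hsum : chi B Tr.obj₁ N - chi B Tr.obj₂ N + chi B Tr.obj₃ N
      = ∑ i ∈ Finset.Icc (-(N : ℤ)) (N : ℤ), (v i - v (i + 1)) := by
    unfold chi
    rw [← Finset.sum_sub_distrib, ← Finset.sum_add_distrib]
    exact Finset.sum_congr rfl (fun i _ => key i)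
  have htel : (∑ i ∈ Finset.Icc (-(N : ℤ)) (N : ℤ), (v i - v (i + 1)))
      = v (-(N : ℤ)) - v ((N : ℤ) + 1) := telescope_Icc v _ _ (by omega)
  have hlow : v (-(N : ℤ)) = 0 := by
    have hz : IsZero ((B.H (-(N : ℤ))).obj Tr.obj₁) :=
      goodBound_choose B Tr.obj₁ _ (Or.inr (by omega))
    simp only [hv, K0Ab_isZero_of_mono (kernel.ι _) hz, smul_zero]
  have hhigh : v ((N : ℤ) + 1) = 0 := by
    have hz : IsZero ((B.H ((N : ℤ) + 1)).obj Tr.obj₁) :=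
      goodBound_choose B Tr.obj₁ _ (Or.inl (by omega))
    simp only [hv, K0Ab_isZero_of_mono (kernel.ι _) hz, smul_zero]
  have hzero : chi B Tr.obj₁ N - chi B Tr.obj₂ N + chi B Tr.obj₃ N = 0 := by
    rw [hsum, htel, hlow, hhigh, sub_zero]
  have : chi B Tr.obj₁ N + chi B Tr.obj₃ N - chi B Tr.obj₂ N = 0 := by
    rw [show chi B Tr.obj₁ N + chi B Tr.obj₃ N - chi B Tr.obj₂ N
      = chi B Tr.obj₁ N - chi B Tr.obj₂ N + chi B Tr.obj₃ N by abel]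
    exact hzero
  exact (sub_eq_zero.mp this).symm

/-- The induced map on free abelian groups. -/
noncomputable def psiFree (B : BoundedTHeart T A) : FreeAbelianGroup T →+ K0Ab A :=
  FreeAbelianGroup.lift (psi0 B)

lemma psiFree_ker (B : BoundedTHeart T A) : K0TriRel T ≤ (psiFree B).ker := by
  rw [K0TriRel]
  apply (AddSubgroup.closure_le _).2
  rintro x ⟨Tr, hTr, rfl⟩
  simp only [SetLike.mem_coe, AddMonoidHom.mem_ker, map_sub]
  rw [psiFree, FreeAbelianGroup.lift_apply_of, FreeAbelianGroup.lift_apply_of, FreeAbelianGroup.lift_apply_of]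
  rw [psi0_rel B hTr]
  abel

/-- The Euler characteristic homomorphism `K₀(T) → K₀(A)`. -/
noncomputable def psiHom (B : BoundedTHeart T A) : K0Tri T →+ K0Ab A :=
  QuotientAddGroup.lift (K0TriRel T) (psiFree B) (psiFree_ker B)

lemma psiHom_cls (B : BoundedTHeart T A) (E : T) :
    psiHom B (K0TriCls T E) = psi0 B E := by
  show QuotientAddGroup.lift _ _ _ (QuotientAddGroup.mk _) = _
  rw [QuotientAddGroup.lift_mk]
  exact FreeAbelianGroup.lift_apply_of _ _

lemma psi0_heart (B : BoundedTHeart T A) (a : A) :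
    psi0 B (B.ι.obj a) = K0AbCls A a := by
  have hg : GoodBound B (B.ι.obj a) 0 := fun i hi => B.H_heart_zero a i (by omega)
  rw [psi0_eq B _ 0 hg]
  unfold chi
  simp only [Nat.cast_zero, neg_zero, Finset.Icc_self, Finset.sum_singleton, Int.negOnePow_zero]
  rw [K0Ab_iso (B.H_heart a).some]
  simp

end Psi

section Surj

variable {T : Type u} [Category.{v} T] [HasZeroObject T] [Preadditive T] [HasShift T ℤ]
  [∀ n : ℤ, (shiftFunctor T n).Additive] [Pretriangulated T]
variable {A : Type u'} [Category.{v'} A] [Abelian A]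

lemma surj_base (B : BoundedTHeart T A) (φ : K0Ab A →+ K0Tri T)
    (hφ : ∀ X : A, φ (K0AbCls A X) = K0TriCls T (B.ι.obj X)) (a : ℤ) (E : T)
    (hlow : ∀ i : ℤ, i < a → IsZero ((B.H i).obj E))
    (hhigh : ∀ i : ℤ, a < i → IsZero ((B.H i).obj E)) :
    K0TriCls T E ∈ Set.range φ := by
  have hLE : B.t.le a E := (B.H_LE_iff a E).2 hhigh
  have hGE : B.t.ge a E := (B.H_GE_iff a E).2 hlow
  have hLE0 : B.t.le 0 (E⟦a⟧) := B.t.le_shift a a 0 (add_zero a) E hLE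
  have hGE0 : B.t.ge 0 (E⟦a⟧) := B.t.ge_shift a a 0 (add_zero a) E hGE
  obtain ⟨c, ⟨e⟩⟩ := B.ι_essSurj _ hLE0 hGE0
  have h1 : φ (K0AbCls A c) = K0TriCls T (E⟦a⟧) := by
    rw [hφ]
    exact K0Tri_iso e
  have h2 := K0Tri_shift a E
  have hsq : ((Int.negOnePow a : ℤ)) * ((Int.negOnePow a : ℤ)) = 1 := by
    rw [← Units.val_mul, Int.units_mul_self, Units.val_one]
  refine ⟨((Int.negOnePow a : ℤ)) • K0AbCls A c, ?_⟩
  rw [map_zsmul, h1, h2, smul_smul, hsq, one_smul]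

lemma surj_aux (B : BoundedTHeart T A) (φ : K0Ab A →+ K0Tri T)
    (hφ : ∀ X : A, φ (K0AbCls A X) = K0TriCls T (B.ι.obj X)) :
    ∀ (k : ℕ) (a : ℤ) (E : T),
      (∀ i : ℤ, i < a → IsZero ((B.H i).obj E)) →
      (∀ i : ℤ, a + (k : ℤ) < i → IsZero ((B.H i).obj E)) →
      K0TriCls T E ∈ Set.range φ := by
  intro k
  induction k with
  | zero =>
    intro a E hlow hhigh
    exact surj_base B φ hφ a E hlow (fun i hi => hhigh i (by omega))
  | succ k ih =>
    intro a E hlow hhigh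
    obtain ⟨X, Y, hXle, hYge, f, g, h, mem⟩ := B.t.exists_triangle E a (a + 1) rfl
    have hXhigh : ∀ i : ℤ, a < i → IsZero ((B.H i).obj X) := (B.H_LE_iff a X).1 hXle
    have hYlow : ∀ i : ℤ, i < a + 1 → IsZero ((B.H i).obj Y) := (B.H_GE_iff (a + 1) Y).1 hYge
    have hXlow : ∀ i : ℤ, i < a → IsZero ((B.H i).obj X) := by
      intro i hi
      obtain ⟨j, rfl⟩ : ∃ j, i = j + 1 := ⟨i - 1, by ring⟩
      obtain ⟨w3, e3⟩ := B.les₃ (Triangle.mk f g h) mem j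
      have hz1 : IsZero ((B.H j).obj Y) := hYlow j (by omega)
      have hz3 : IsZero ((B.H (j + 1)).obj E) := hlow (j + 1) hi
      exact e3.isZero_X₂ (hz1.eq_zero_of_src _) (hz3.eq_zero_of_tgt _)
    have hXrange := surj_base B φ hφ a X hXlow hXhigh
    have hYhigh : ∀ i : ℤ, (a + 1) + (k : ℤ) < i → IsZero ((B.H i).obj Y) := by
      intro i hi
      obtain ⟨w2, e2⟩ := B.les₂ (Triangle.mk f g h) mem i
      have hz1 : IsZero ((B.H i).obj E) := hhigh i (by push_cast; omega)
      have hz3 : IsZero ((B.H (i + 1)).obj X) := hXhigh (i + 1) (by omega)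
      exact e2.isZero_X₂ (hz1.eq_zero_of_src _) (hz3.eq_zero_of_tgt _)
    have hYrange := ih (a + 1) Y hYlow hYhigh
    obtain ⟨u, hu⟩ := hXrange
    obtain ⟨w, hw⟩ := hYrange
    refine ⟨u + w, ?_⟩
    rw [map_add, hu, hw]
    exact (K0Tri_rel mem).symm

end Surj


/-- for a bounded t-structure with heart `A` on `C`, the natural map
`K₀(A) → K₀(C)`, `[X] ↦ [X]`, is an isomorphism of abelian groups. -/
theorem stmt13 (B : BoundedTHeart T A) (φ : K0Ab A →+ K0Tri T)
    (hφ : ∀ X : A, φ (K0AbCls A X) = K0TriCls T (B.ι.obj X)) :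
    Function.Bijective φ := by
  constructor
  · -- injectivity: `psiHom B` is a left inverse
    have hleft : ∀ z : K0Ab A, psiHom B (φ z) = z := by
      intro z
      obtain ⟨w, rfl⟩ := QuotientAddGroup.mk_surjective z
      refine FreeAbelianGroup.induction_on w ?_ ?_ ?_ ?_
      · erw [map_zero, map_zero]; rfl
      · intro x
        show psiHom B (φ (K0AbCls A x)) = K0AbCls A x
        rw [hφ, psiHom_cls, psi0_heart]
      · intro x hx
        have hmk : (QuotientAddGroup.mk (-FreeAbelianGroup.of x) : K0Ab A)
            = - QuotientAddGroup.mk (FreeAbelianGroup.of x) := by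
          simp
        erw [hmk, map_neg, map_neg, hx]; rfl
      · intro x y hx hy
        have hmk : (QuotientAddGroup.mk (x + y) : K0Ab A)
            = QuotientAddGroup.mk x + QuotientAddGroup.mk y := by
          simp
        erw [hmk, map_add, map_add, hx, hy]; rfl
    exact Function.LeftInverse.injective hleft
  · -- surjectivity
    intro z
    obtain ⟨w, rfl⟩ := QuotientAddGroup.mk_surjective z
    refine FreeAbelianGroup.induction_on w ?_ ?_ ?_ ?_
    · exact ⟨0, by simp; rfl⟩
    · intro x
      obtain ⟨n, hLE, hGE⟩ := B.bounded x
      have hlow : ∀ i : ℤ, i < -(n : ℤ) → IsZero ((B.H i).obj x) :=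
        (B.H_GE_iff _ x).1 hGE
      have hhigh : ∀ i : ℤ, -(n : ℤ) + ((2 * n : ℕ) : ℤ) < i → IsZero ((B.H i).obj x) := by
        intro i hi
        exact (B.H_LE_iff _ x).1 hLE i (by push_cast at hi ⊢; omega)
      exact surj_aux B φ hφ (2 * n) (-(n : ℤ)) x hlow hhigh
    · rintro x ⟨u, hu⟩
      refine ⟨-u, ?_⟩
      rw [map_neg, hu]
      simp; rfl
    · rintro x y ⟨u, hu⟩ ⟨w', hw⟩
      refine ⟨u + w', ?_⟩
      rw [map_add, hu, hw]
      simp; rfl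
end
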